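/- Let Γ be a connected bipartite simple graph of order ≥ 3 whose both bipartition classes have odd size. Then there is no edge labelling f : E(Γ) → Z/2 such that the weighted degrees w(v) = ∑_{e ∋ v} f(e) properly colour the vertices (i.e. w is constant 1 on one part and 0 on the other is the only possible pattern, and it is impossible). -/

import Mathlib

/-- The weighted degree of a vertex: the sum of the labels of incident edges. -/
def weightedDeg {V : Type*} [Fintype V] [DecidableEq V] (Γ : SimpleGraph V)
    [DecidableRel Γ.Adj] {A : Type*} [AddCommMonoid A]
    (f : Sym2 V → A) (v : V) : A :=
  ∑ e ∈ Γ.edgeFinset.filter (fun e => v ∈ e), f e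

/-- A connected bipartite graph of order at least 3 whose two
bipartition classes both have odd size admits no `Z/2`-edge-labelling whose
weighted degrees properly colour the vertices. -/
theorem stmt14 {V : Type*} [Fintype V] [DecidableEq V] (Γ : SimpleGraph V)
    [DecidableRel Γ.Adj] (hconn : Γ.Connected) (hn : 3 ≤ Fintype.card V)
    (V₁ V₂ : Finset V) (hdisj : Disjoint V₁ V₂) (hcover : V₁ ∪ V₂ = Finset.univ)
    (hbip : ∀ u v : V, Γ.Adj u v → (u ∈ V₁ ↔ v ∈ V₂))
    (hodd : Odd V₁.card ∧ Odd V₂.card) :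
    ¬ ∃ f : Sym2 V → ZMod 2,
      ∀ u v : V, Γ.Adj u v → weightedDeg Γ f u ≠ weightedDeg Γ f v := by
  rintro ⟨f, hf⟩
  set w : V → ZMod 2 := weightedDeg Γ f with hw
  have hmem : ∀ v : V, v ∈ V₁ ∨ v ∈ V₂ := by
    intro v
    have : v ∈ V₁ ∪ V₂ := by rw [hcover]; exact Finset.mem_univ v
    exact Finset.mem_union.mp this
  have hnot : ∀ v : V, v ∈ V₁ → v ∉ V₂ := fun v h1 h2 =>
    (Finset.disjoint_left.mp hdisj h1) h2
  have hz : ∀ x y : ZMod 2, x ≠ y → y = x + 1 := by decide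
  have hsucc : ∀ x : ZMod 2, x + 1 + 1 = x := by decide
  set g : V → ZMod 2 := fun v => if v ∈ V₁ then w v else w v + 1 with hg
  -- g is constant along edges
  have hstep : ∀ u v : V, Γ.Adj u v → g u = g v := by
    intro u v huv
    have hne : w u ≠ w v := hf u v huv
    have h12 := hbip u v huv
    have hwv : w v = w u + 1 := hz _ _ hne
    by_cases hu : u ∈ V₁
    · have hv1 : v ∉ V₁ := fun h => hnot v h (h12.mp hu)
      simp only [hg, if_pos hu, if_neg hv1, hwv, hsucc]
    · have hv2 : v ∉ V₂ := fun h => hu (h12.mpr h)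
      have hv1 : v ∈ V₁ := (hmem v).resolve_right hv2
      simp only [hg, if_neg hu, if_pos hv1, hwv]
  -- hence g is constant on the connected graph
  have hwalk : ∀ (u v : V) (p : Γ.Walk u v), g u = g v := by
    intro u v p
    induction p with
    | nil => rfl
    | cons h q ih => exact (hstep _ _ h).trans ih
  have hgconst : ∀ u v : V, g u = g v := fun u v =>
    hwalk u v (hconn u v).some
  -- pick a base vertex in V₁
  have hV1ne : V₁.Nonempty := Finset.card_pos.mp hodd.1.pos
  obtain ⟨v₀, hv₀⟩ := hV1ne
  set a : ZMod 2 := w v₀ with ha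
  have hga : g v₀ = a := by simp [hg, if_pos hv₀, ha]
  have hval1 : ∀ v ∈ V₁, w v = a := by
    intro v hv
    have := (hgconst v v₀).trans hga
    simpa [hg, if_pos hv] using this
  have hval2 : ∀ v ∈ V₂, w v = a + 1 := by
    intro v hv
    have hv1 : v ∉ V₁ := fun h => hnot v h hv
    have h1 : w v + 1 = a := by
      have := (hgconst v v₀).trans hga
      simpa [hg, if_neg hv1] using this
    have := congrArg (· + 1) h1
    simpa [hsucc] using this
  -- double counting: the total sum of weighted degrees is 0
  have hxx : ∀ x : ZMod 2, x + x = 0 := by decide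
  have hsum0 : ∑ v : V, w v = 0 := by
    have : ∑ v : V, w v
        = ∑ v : V, ∑ e ∈ Γ.edgeFinset, (if v ∈ e then f e else 0) := by
      refine Finset.sum_congr rfl fun v _ => ?_
      rw [hw]
      unfold weightedDeg
      rw [Finset.sum_filter]
    rw [this, Finset.sum_comm]
    refine Finset.sum_eq_zero fun e he => ?_
    rw [← Finset.sum_filter, Finset.sum_const]
    have hcard : (Finset.univ.filter (fun v => v ∈ e)).card = 2 := by
      induction e with
      | _ x y =>
        have hxy : x ≠ y := by
          have := SimpleGraph.not_isDiag_of_mem_edgeSet Γ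
            (SimpleGraph.mem_edgeFinset.mp he)
          simpa [Sym2.isDiag_iff_proj_eq] using this
        have : (Finset.univ.filter (fun v => v ∈ s(x, y))) = {x, y} := by
          ext v
          simp [Sym2.mem_iff]
        rw [this, Finset.card_insert_of_notMem (by simp [hxy]), Finset.card_singleton]
    rw [hcard, two_nsmul, hxx]
  -- but the sum equals |V₁| • a + |V₂| • (a+1) = a + (a+1) = 1
  have hoddsmul : ∀ (n : ℕ), Odd n → ∀ x : ZMod 2, n • x = x := by
    intro n hn x
    obtain ⟨k, rfl⟩ := hn
    have h2 : (2 : ZMod 2) = 0 := by decide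
    rw [nsmul_eq_mul]
    push_cast
    rw [h2]
    ring
  have hsplit : ∑ v : V, w v = ∑ v ∈ V₁, w v + ∑ v ∈ V₂, w v := by
    rw [← Finset.sum_union hdisj, hcover]
  have h1 : ∑ v ∈ V₁, w v = a := by
    rw [Finset.sum_congr rfl hval1, Finset.sum_const, hoddsmul _ hodd.1]
  have h2 : ∑ v ∈ V₂, w v = a + 1 := by
    rw [Finset.sum_congr rfl hval2, Finset.sum_const, hoddsmul _ hodd.2]
  have : (0 : ZMod 2) = a + (a + 1) := by rw [← hsum0, hsplit, h1, h2]
  have hfin : ∀ a : ZMod 2, a + (a + 1) = 1 := by decide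
  rw [hfin] at this
  exact absurd this (by decide)
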